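/- arXiv:1301.7714 — 2 statements merged into one kernel-verified Lean document; each statement's English description precedes it below -/
import Mathlib

section
/- For all integers n ≥ 2 and 0 ≤ r ≤ n, one has N(n, 0, r) = 2·M(n−1, 0, r−1, r); that is, the number of ordered pairs of nonintersecting lattice paths of length n both ending at (r, n−r) is twice the number of ordered pairs of nonintersecting lattice paths of length n−1 ending at (r−1, n−r) and (r, n−r−1) respectively. -/
/-- The x-coordinate (number of East steps) of the lattice path `P` after `m` steps. -/
def latticePos {n : ℕ} (P : Fin n → Bool) (m : ℕ) : ℕ :=
  (Finset.univ.filter (fun i : Fin n => (i : ℕ) < m ∧ P i = true)).card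

/-- The number of intersections of paths `P` and `Q` (common lattice points with
coordinate sum strictly between `0` and `n`). -/
def latticeInter {n : ℕ} (P Q : Fin n → Bool) : ℕ :=
  ((Finset.Ioo 0 n).filter (fun m => latticePos P m = latticePos Q m)).card

/-- Number of ordered pairs of lattice paths of length `n`, ending at `(r, n-r)` and
`(s, n-s)` respectively, intersecting exactly `k` times (natural-number version). -/
def Mnat (n k r s : ℕ) : ℕ :=
  (Finset.univ.filter (fun PQ : (Fin n → Bool) × (Fin n → Bool) =>
      latticePos PQ.1 n = r ∧ latticePos PQ.2 n = s ∧ latticeInter PQ.1 PQ.2 = k)).card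

/-- `M n k r s`, extended by zero to integer arguments. -/
def M (n k r s : ℤ) : ℤ :=
  if 0 ≤ n ∧ 0 ≤ k ∧ 0 ≤ r ∧ 0 ≤ s then Mnat n.toNat k.toNat r.toNat s.toNat else 0

/-- `N n k r = M n k r r`. -/
def N (n k r : ℤ) : ℤ := M n k r r

/-- `NE n k p = Σ_{r+s=2p, 0 ≤ r,s ≤ n} M n k r s`. -/
noncomputable def NE (n k p : ℤ) : ℤ := ∑ r ∈ Finset.Icc (0 : ℤ) n, M n k r (2 * p - r)

/-- `NO n k p = Σ_{r+s=2p+1, 0 ≤ r,s ≤ n} M n k r s`. -/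
noncomputable def NO (n k p : ℤ) : ℤ := ∑ r ∈ Finset.Icc (0 : ℤ) n, M n k r (2 * p + 1 - r)

/-- Binomial coefficient for integer arguments (zero unless both are nonnegative). -/
def ichoose (a b : ℤ) : ℤ :=
  if 0 ≤ a ∧ 0 ≤ b then (a.toNat).choose b.toNat else 0

open Finset

lemma latticePos_zero {n : ℕ} (P : Fin n → Bool) : latticePos P 0 = 0 := by
  simp [latticePos]

lemma latticePos_succ {n : ℕ} (P : Fin n → Bool) {m : ℕ} (h : m < n) :
    latticePos P (m + 1) = latticePos P m + (if P ⟨m, h⟩ then 1 else 0) := by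
  unfold latticePos
  by_cases hP : P ⟨m, h⟩
  · rw [if_pos hP]
    have hins : (univ.filter fun i : Fin n => (i : ℕ) < m + 1 ∧ P i = true)
        = insert ⟨m, h⟩ (univ.filter fun i : Fin n => (i : ℕ) < m ∧ P i = true) := by
      ext i
      simp only [mem_filter, mem_univ, true_and, mem_insert]
      constructor
      · rintro ⟨hi, hPi⟩
        rcases Nat.lt_succ_iff_lt_or_eq.mp hi with hi | hi
        · exact Or.inr ⟨hi, hPi⟩
        · exact Or.inl (Fin.ext hi)
      · rintro (rfl | ⟨hi, hPi⟩)
        · exact ⟨Nat.lt_succ_self m, hP⟩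
        · exact ⟨Nat.lt_succ_of_lt hi, hPi⟩
    rw [hins, card_insert_of_notMem (by simp)]
  · rw [if_neg hP, Nat.add_zero]
    have hfe : (univ.filter fun i : Fin n => (i : ℕ) < m + 1 ∧ P i = true)
        = (univ.filter fun i : Fin n => (i : ℕ) < m ∧ P i = true) := by
      ext i
      simp only [mem_filter, mem_univ, true_and, and_congr_left_iff]
      intro hPi
      constructor
      · intro hi
        rcases Nat.lt_succ_iff_lt_or_eq.mp hi with hi | hi
        · exact hi
        · exact absurd (show P ⟨m, h⟩ = true by
            rw [show (⟨m, h⟩ : Fin n) = i from (Fin.ext hi).symm]; exact hPi) hP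
      · exact Nat.lt_succ_of_lt
    rw [hfe]
    omega

lemma latticePos_mono {n : ℕ} (P : Fin n → Bool) {a b : ℕ} (h : a ≤ b) :
    latticePos P a ≤ latticePos P b := by
  apply card_le_card
  intro i hi
  simp only [mem_filter, mem_univ, true_and] at *
  exact ⟨lt_of_lt_of_le hi.1 h, hi.2⟩

lemma latticePos_succ_le {n : ℕ} (P : Fin n → Bool) (m : ℕ) :
    latticePos P (m + 1) ≤ latticePos P m + 1 := by
  by_cases h : m < n
  · rw [latticePos_succ P h]; split <;> omega
  · have hfe : latticePos P (m + 1) = latticePos P m := by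
      unfold latticePos
      congr 1
      ext i
      simp only [mem_filter, mem_univ, true_and]
      have := i.isLt
      constructor <;> rintro ⟨h1, h2⟩ <;> exact ⟨by omega, h2⟩
    omega

lemma latticePos_init {m : ℕ} (P : Fin (m + 1) → Bool) {k : ℕ} (hk : k ≤ m) :
    latticePos (Fin.init P) k = latticePos P k := by
  induction k with
  | zero => rw [latticePos_zero, latticePos_zero]
  | succ k ih =>
    have hk' : k < m := hk
    rw [latticePos_succ (Fin.init P) hk', latticePos_succ P (Nat.lt_succ_of_lt hk'),
      ih (le_of_lt hk')]
    congr 1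

lemma latticePos_snoc_of_le {m : ℕ} (A : Fin m → Bool) (b : Bool) {k : ℕ} (hk : k ≤ m) :
    latticePos (Fin.snoc A b) k = latticePos A k := by
  have := latticePos_init (Fin.snoc A b : Fin (m + 1) → Bool) hk
  rw [Fin.init_snoc] at this
  exact this.symm

lemma latticePos_snoc_last {m : ℕ} (A : Fin m → Bool) (b : Bool) :
    latticePos (Fin.snoc A b) (m + 1) = latticePos A m + (if b then 1 else 0) := by
  rw [latticePos_succ (Fin.snoc A b) (Nat.lt_succ_self m)]
  have h1 : (Fin.snoc A b : Fin (m + 1) → Bool) ⟨m, Nat.lt_succ_self m⟩ = b := by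
    have : (⟨m, Nat.lt_succ_self m⟩ : Fin (m + 1)) = Fin.last m := rfl
    rw [this, Fin.snoc_last]
  rw [h1, latticePos_snoc_of_le A b le_rfl]

lemma lattice_sign {n : ℕ} (P Q : Fin n → Bool)
    (hI : ∀ k, 0 < k → k < n → latticePos P k ≠ latticePos Q k)
    {a b : ℕ} (hb : b < n) (hstart : latticePos Q a < latticePos P a) :
    ∀ k, a ≤ k → k ≤ b → latticePos Q k < latticePos P k := by
  intro k hak hkb
  induction k with
  | zero => have ha0 : a = 0 := Nat.le_zero.mp hak; rwa [← ha0]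
  | succ k ih =>
    rcases Nat.lt_or_ge a (k + 1) with h | h
    · have hlt := ih (by omega) (by omega)
      have h1 := latticePos_succ_le Q k
      have h2 := latticePos_mono P (show k ≤ k + 1 by omega)
      have hne := hI (k + 1) (by omega) (by omega)
      show latticePos Q (k + 1) < latticePos P (k + 1)
      omega
    · have : a = k + 1 := by omega
      rwa [← this]

lemma inter_pointwise {n : ℕ} {P Q : Fin n → Bool} (h : latticeInter P Q = 0) :
    ∀ k, 0 < k → k < n → latticePos P k ≠ latticePos Q k := by
  intro k hk1 hk2 he
  unfold latticeInter at h
  rw [card_eq_zero, filter_eq_empty_iff] at h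
  exact h (mem_Ioo.mpr ⟨hk1, hk2⟩) he

lemma inter_of_pointwise {n : ℕ} {P Q : Fin n → Bool}
    (h : ∀ k, 0 < k → k < n → latticePos P k ≠ latticePos Q k) :
    latticeInter P Q = 0 := by
  unfold latticeInter
  rw [card_eq_zero, filter_eq_empty_iff]
  intro k hk
  rw [mem_Ioo] at hk
  exact h k hk.1 hk.2

lemma latticeInter_comm {n : ℕ} (P Q : Fin n → Bool) :
    latticeInter P Q = latticeInter Q P := by
  unfold latticeInter
  congr 1
  apply filter_congr
  intro x _
  exact eq_comm

lemma latticePos_one' {n : ℕ} (P : Fin n → Bool) (h : 0 < n) :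
    latticePos P 1 = if P ⟨0, h⟩ = true then 1 else 0 := by
  have := latticePos_succ P (m := 0) h
  rw [latticePos_zero] at this
  simpa using this

lemma latticePos_one {m : ℕ} (P : Fin (m + 1) → Bool) :
    latticePos P 1 = if P 0 = true then 1 else 0 := by
  have h01 : (0 : ℕ) < m + 1 := Nat.succ_pos m
  have e0 : (⟨0, h01⟩ : Fin (m + 1)) = 0 := by ext; simp
  rw [latticePos_one' P h01, e0]

lemma forward_facts {m q : ℕ} (hm : 1 ≤ m) (P Q : Fin (m + 1) → Bool)
    (hP : latticePos P (m + 1) = q + 1) (hQ : latticePos Q (m + 1) = q + 1)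
    (hI : ∀ k, 0 < k → k < m + 1 → latticePos P k ≠ latticePos Q k)
    (hP0 : P 0 = true) :
    latticePos P m = q + 1 ∧ latticePos Q m = q ∧
      P (Fin.last m) = false ∧ Q (Fin.last m) = true := by
  have hP1 : latticePos P 1 = 1 := by rw [latticePos_one, hP0]; simp
  have hQ1 : latticePos Q 1 = 0 := by
    have hne := hI 1 one_pos (by omega)
    rw [hP1] at hne
    rw [latticePos_one]
    cases hQb : Q 0 with
    | false => simp
    | true => exfalso; apply hne; rw [latticePos_one, hQb]; simp
  have hQmPm : latticePos Q m < latticePos P m :=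
    lattice_sign P Q hI (b := m) (a := 1) (Nat.lt_succ_self m) (by omega) m hm le_rfl
  have h2 : latticePos P m ≤ q + 1 := by
    rw [← hP]; exact latticePos_mono P (by omega)
  have h3 := latticePos_succ_le Q m
  have hPm : latticePos P m = q + 1 := by omega
  have hQm : latticePos Q m = q := by omega
  have hsP := latticePos_succ P (Nat.lt_succ_self m)
  have hsQ := latticePos_succ Q (Nat.lt_succ_self m)
  have elast : (⟨m, Nat.lt_succ_self m⟩ : Fin (m + 1)) = Fin.last m := rfl
  rw [elast] at hsP hsQ
  refine ⟨hPm, hQm, ?_, ?_⟩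
  · cases hb : P (Fin.last m) with
    | false => rfl
    | true => rw [hb] at hsP; simp at hsP; omega
  · cases hb : Q (Fin.last m) with
    | true => rfl
    | false => rw [hb] at hsQ; simp at hsQ; omega

lemma backward_B0 {m q : ℕ} (hm : 1 ≤ m) (A B : Fin m → Bool)
    (hA : latticePos A m = q) (hB : latticePos B m = q + 1)
    (hI : ∀ k, 0 < k → k < m → latticePos A k ≠ latticePos B k) :
    B ⟨0, hm⟩ = true := by
  cases hb : B ⟨0, hm⟩ with
  | true => rfl
  | false =>
    exfalso
    have hB1 : latticePos B 1 = 0 := by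
      rw [latticePos_one' B hm, hb]; rfl
    rcases Nat.eq_or_lt_of_le hm with h1 | h1
    · have := congrArg (latticePos B) h1
      omega
    · have hA1 : latticePos A 1 = 1 := by
        have hne := hI 1 one_pos h1
        rw [hB1, latticePos_one' A hm] at hne
        rw [latticePos_one' A hm]
        cases hAb : A ⟨0, hm⟩ with
        | false => simp [hAb] at hne
        | true => simp
      have hsign := lattice_sign A B hI (b := m - 1) (a := 1) (by omega) (by omega)
        (m - 1) (by omega) le_rfl
      have h4 : latticePos A (m - 1) ≤ latticePos A m := latticePos_mono A (by omega)
      have h5 : latticePos B m ≤ latticePos B (m - 1) + 1 := by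
        have := latticePos_succ_le B (m - 1)
        rw [show m - 1 + 1 = m by omega] at this
        exact this
      omega

lemma Mnat_zero_zero (n : ℕ) (hn : 2 ≤ n) : Mnat n 0 0 0 = 0 := by
  unfold Mnat
  rw [card_eq_zero, filter_eq_empty_iff]
  rintro ⟨P, Q⟩ - ⟨h1, h2, h3⟩
  dsimp only at h1 h2 h3
  have h4 := latticePos_mono P (show 1 ≤ n by omega)
  have h5 := latticePos_mono Q (show 1 ≤ n by omega)
  exact inter_pointwise h3 1 one_pos (by omega) (by omega)

lemma main_nat (m q : ℕ) (hm : 1 ≤ m) :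
    Mnat (m + 1) 0 (q + 1) (q + 1) = 2 * Mnat m 0 q (q + 1) := by
  unfold Mnat
  have key : ((univ.filter (fun PQ : (Fin (m + 1) → Bool) × (Fin (m + 1) → Bool) =>
        (latticePos PQ.1 (m + 1) = q + 1 ∧ latticePos PQ.2 (m + 1) = q + 1 ∧
          latticeInter PQ.1 PQ.2 = 0) ∧ PQ.1 0 = true)).card)
      = ((univ.filter (fun AB : (Fin m → Bool) × (Fin m → Bool) =>
        latticePos AB.1 m = q ∧ latticePos AB.2 m = q + 1 ∧
          latticeInter AB.1 AB.2 = 0)).card) := by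
    refine card_bij' (fun PQ _ => (Fin.init PQ.2, Fin.init PQ.1))
      (fun AB _ => (Fin.snoc AB.2 false, Fin.snoc AB.1 true)) ?_ ?_ ?_ ?_
    · rintro ⟨P, Q⟩ h
      simp only [mem_filter, mem_univ, true_and] at h ⊢
      obtain ⟨⟨hP, hQ, hint⟩, hP0⟩ := h
      have hIpt := inter_pointwise hint
      obtain ⟨hPm, hQm, hPl, hQl⟩ := forward_facts hm P Q hP hQ hIpt hP0
      refine ⟨?_, ?_, ?_⟩
      · rw [latticePos_init Q le_rfl]; exact hQm
      · rw [latticePos_init P le_rfl]; exact hPm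
      · apply inter_of_pointwise
        intro k hk1 hk2
        rw [latticePos_init Q (by omega), latticePos_init P (by omega)]
        exact Ne.symm (hIpt k hk1 (by omega))
    · rintro ⟨A, B⟩ h
      simp only [mem_filter, mem_univ, true_and] at h ⊢
      obtain ⟨hA, hB, hint⟩ := h
      have hIpt := inter_pointwise hint
      have hB0 := backward_B0 hm A B hA hB hIpt
      refine ⟨⟨?_, ?_, ?_⟩, ?_⟩
      · rw [latticePos_snoc_last, hB]; simp
      · rw [latticePos_snoc_last, hA]; simp
      · apply inter_of_pointwise
        intro k hk1 hk2
        have hkm : k ≤ m := by omega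
        rw [latticePos_snoc_of_le B false hkm, latticePos_snoc_of_le A true hkm]
        rcases Nat.lt_or_ge k m with h | h
        · exact Ne.symm (hIpt k hk1 h)
        · have hkme : k = m := by omega
          rw [hkme, hA, hB]; omega
      · have e0 : (0 : Fin (m + 1)) = Fin.castSucc ⟨0, hm⟩ := by ext; simp
        rw [e0, Fin.snoc_castSucc]
        exact hB0
    · rintro ⟨P, Q⟩ h
      simp only [mem_filter, mem_univ, true_and] at h
      obtain ⟨⟨hP, hQ, hint⟩, hP0⟩ := h
      obtain ⟨hPm, hQm, hPl, hQl⟩ := forward_facts hm P Q hP hQ (inter_pointwise hint) hP0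
      simp only [Prod.mk.injEq]
      constructor
      · rw [← hPl, Fin.snoc_init_self]
      · rw [← hQl, Fin.snoc_init_self]
    · rintro ⟨A, B⟩ h
      simp only [Prod.mk.injEq]
      constructor
      · rw [Fin.init_snoc]
      · rw [Fin.init_snoc]
  have hunion : (univ.filter (fun PQ : (Fin (m + 1) → Bool) × (Fin (m + 1) → Bool) =>
        latticePos PQ.1 (m + 1) = q + 1 ∧ latticePos PQ.2 (m + 1) = q + 1 ∧
          latticeInter PQ.1 PQ.2 = 0))
      = (univ.filter (fun PQ : (Fin (m + 1) → Bool) × (Fin (m + 1) → Bool) =>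
        (latticePos PQ.1 (m + 1) = q + 1 ∧ latticePos PQ.2 (m + 1) = q + 1 ∧
          latticeInter PQ.1 PQ.2 = 0) ∧ PQ.1 0 = true))
      ∪ (univ.filter (fun PQ : (Fin (m + 1) → Bool) × (Fin (m + 1) → Bool) =>
        (latticePos PQ.1 (m + 1) = q + 1 ∧ latticePos PQ.2 (m + 1) = q + 1 ∧
          latticeInter PQ.1 PQ.2 = 0) ∧ PQ.1 0 = false)) := by
    ext x
    simp only [mem_union, mem_filter, mem_univ, true_and]
    cases hx : x.1 0 <;> tauto
  have hdisj : Disjoint (univ.filter (fun PQ : (Fin (m + 1) → Bool) × (Fin (m + 1) → Bool) =>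
        (latticePos PQ.1 (m + 1) = q + 1 ∧ latticePos PQ.2 (m + 1) = q + 1 ∧
          latticeInter PQ.1 PQ.2 = 0) ∧ PQ.1 0 = true))
      (univ.filter (fun PQ : (Fin (m + 1) → Bool) × (Fin (m + 1) → Bool) =>
        (latticePos PQ.1 (m + 1) = q + 1 ∧ latticePos PQ.2 (m + 1) = q + 1 ∧
          latticeInter PQ.1 PQ.2 = 0) ∧ PQ.1 0 = false)) := by
    rw [disjoint_left]
    intro a ha hb
    simp only [mem_filter, mem_univ, true_and] at ha hb
    rw [ha.2] at hb
    exact absurd hb.2 (by simp)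
  have hswap : ((univ.filter (fun PQ : (Fin (m + 1) → Bool) × (Fin (m + 1) → Bool) =>
        (latticePos PQ.1 (m + 1) = q + 1 ∧ latticePos PQ.2 (m + 1) = q + 1 ∧
          latticeInter PQ.1 PQ.2 = 0) ∧ PQ.1 0 = false)).card)
      = ((univ.filter (fun PQ : (Fin (m + 1) → Bool) × (Fin (m + 1) → Bool) =>
        (latticePos PQ.1 (m + 1) = q + 1 ∧ latticePos PQ.2 (m + 1) = q + 1 ∧
          latticeInter PQ.1 PQ.2 = 0) ∧ PQ.1 0 = true)).card) := by
    refine card_bij' (fun PQ _ => (PQ.2, PQ.1)) (fun PQ _ => (PQ.2, PQ.1)) ?_ ?_ ?_ ?_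
    · rintro ⟨P, Q⟩ h
      simp only [mem_filter, mem_univ, true_and] at h ⊢
      obtain ⟨⟨hP, hQ, hint⟩, hP0⟩ := h
      have hIpt := inter_pointwise hint
      refine ⟨⟨hQ, hP, by rw [latticeInter_comm]; exact hint⟩, ?_⟩
      have hne := hIpt 1 one_pos (by omega)
      rw [latticePos_one, latticePos_one, hP0] at hne
      cases hQb : Q 0 with
      | true => rfl
      | false => exfalso; apply hne; rw [hQb]
    · rintro ⟨P, Q⟩ h
      simp only [mem_filter, mem_univ, true_and] at h ⊢
      obtain ⟨⟨hP, hQ, hint⟩, hP0⟩ := h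
      have hIpt := inter_pointwise hint
      refine ⟨⟨hQ, hP, by rw [latticeInter_comm]; exact hint⟩, ?_⟩
      have hne := hIpt 1 one_pos (by omega)
      rw [latticePos_one, latticePos_one, hP0] at hne
      cases hQb : Q 0 with
      | false => rfl
      | true => exfalso; apply hne; rw [hQb]
    · rintro ⟨P, Q⟩ h; rfl
    · rintro ⟨P, Q⟩ h; rfl
  rw [hunion, card_union_of_disjoint hdisj, hswap, key]
  ring

/-- `N(n, 0, r) = 2 · M(n−1, 0, r−1, r)`. -/
theorem N_zero_eq_twice_M (n r : ℤ) (hn : 2 ≤ n) (hr : 0 ≤ r) (hrn : r ≤ n) :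
    N n 0 r = 2 * M (n - 1) 0 (r - 1) r := by
  rcases eq_or_lt_of_le hr with h0 | h1
  · unfold N M
    rw [← h0]
    rw [if_pos ⟨by omega, by omega, by omega, by omega⟩, if_neg (by push_neg; intro _ _; omega)]
    rw [show (0 : ℤ).toNat = 0 from rfl, Mnat_zero_zero n.toNat (by omega)]
    simp
  · unfold N M
    rw [if_pos ⟨by omega, by omega, by omega, by omega⟩,
      if_pos ⟨by omega, by omega, by omega, by omega⟩]
    obtain ⟨m, hm⟩ : ∃ m, n.toNat = m + 1 + 1 := ⟨n.toNat - 2, by omega⟩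
    obtain ⟨qq, hq⟩ : ∃ qq, r.toNat = qq + 1 := ⟨r.toNat - 1, by omega⟩
    have h1' : (n - 1).toNat = m + 1 := by omega
    have h2' : (r - 1).toNat = qq := by omega
    rw [hm, hq, h1', h2']
    have h3' : (0 : ℤ).toNat = 0 := rfl
    rw [h3']
    exact_mod_cast main_nat (m + 1) qq (by omega)
end

section
/- For all integers n ≥ 1 and 0 ≤ k ≤ n−1, one has n · Σ_{p=0}^{n} N(n,k,p) = 2^{k+1} · (k+1) · binomial(2n−k−2, n−1). -/
open Finset

/-! ### lattice path step lemmas -/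

lemma latticePos_eq_sum {n : ℕ} (P : Fin n → Bool) (m : ℕ) :
    latticePos P m = ∑ i : Fin n, if (i : ℕ) < m ∧ P i = true then 1 else 0 :=
  Finset.card_filter _ _

lemma latticePos_snoc_of_le_s10 {n : ℕ} (P : Fin n → Bool) (a : Bool) (m : ℕ) (hm : m ≤ n) :
    latticePos (Fin.snoc P a) m = latticePos P m := by
  rw [latticePos_eq_sum, latticePos_eq_sum, Fin.sum_univ_castSucc]
  have h2 : ¬ ((Fin.last n : ℕ) < m ∧ (Fin.snoc (α := fun _ => Bool) P a (Fin.last n) = true)) := by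
    simp only [Fin.val_last]; intro h; omega
  rw [if_neg h2]
  simp [Fin.snoc_castSucc]

lemma latticePos_snoc_top {n : ℕ} (P : Fin n → Bool) (a : Bool) :
    latticePos (Fin.snoc P a) (n + 1) = latticePos P n + (if a then 1 else 0) := by
  rw [latticePos_eq_sum, latticePos_eq_sum, Fin.sum_univ_castSucc]
  congr 1
  · apply Finset.sum_congr rfl
    intro i _
    have h1 : (i : ℕ) < n := i.isLt
    have h2 : (i : ℕ) < n + 1 := by omega
    simp [Fin.snoc_castSucc, Fin.coe_castSucc, h1, h2]
  · simp [Fin.snoc_last]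

lemma latticeInter_snoc {n : ℕ} (hn : 1 ≤ n) (P Q : Fin n → Bool) (a b : Bool) :
    latticeInter (Fin.snoc P a) (Fin.snoc Q b) =
      latticeInter P Q + (if latticePos P n = latticePos Q n then 1 else 0) := by
  classical
  unfold latticeInter
  have hIoo : Finset.Ioo 0 (n+1) = insert n (Finset.Ioo 0 n) := by
    ext x; simp [Finset.mem_Ioo, Finset.mem_insert]; omega
  rw [hIoo, Finset.filter_insert]
  have hcong : ∀ m ∈ Finset.Ioo 0 n,
      (latticePos (Fin.snoc P a) m = latticePos (Fin.snoc Q b) m) =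
      (latticePos P m = latticePos Q m) := by
    intro m hm
    rw [Finset.mem_Ioo] at hm
    rw [latticePos_snoc_of_le_s10 P a m (by omega), latticePos_snoc_of_le_s10 Q b m (by omega)]
  rw [Finset.filter_congr (fun m hm => by rw [hcong m hm])]
  rw [latticePos_snoc_of_le_s10 P a n le_rfl, latticePos_snoc_of_le_s10 Q b n le_rfl]
  by_cases h : latticePos P n = latticePos Q n
  · rw [if_pos h, if_pos h, Finset.card_insert_of_notMem (by simp)]
  · rw [if_neg h, if_neg h]; ring

/-! ### the cast lemma and basic vanishing -/

lemma Mcast (n : ℕ) (k r s : ℤ) :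
    M n k r s = ∑ P : Fin n → Bool, ∑ Q : Fin n → Bool,
      (if ((latticePos P n : ℤ) = r ∧ (latticePos Q n : ℤ) = s ∧
           (latticeInter P Q : ℤ) = k) then (1 : ℤ) else 0) := by
  classical
  unfold M
  by_cases h : 0 ≤ k ∧ 0 ≤ r ∧ 0 ≤ s
  · obtain ⟨hk, hr, hs⟩ := h
    rw [if_pos ⟨by positivity, hk, hr, hs⟩]
    simp only [Int.toNat_natCast]
    unfold Mnat
    rw [Finset.card_filter]
    push_cast
    rw [Fintype.sum_prod_type]
    apply Finset.sum_congr rfl; intro P _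
    apply Finset.sum_congr rfl; intro Q _
    dsimp only
    congr 1
    · apply propext
      constructor
      · rintro ⟨h1, h2, h3⟩
        refine ⟨?_, ?_, ?_⟩ <;> omega
      · rintro ⟨h1, h2, h3⟩
        refine ⟨?_, ?_, ?_⟩ <;> omega
  · rw [if_neg (by tauto)]
    symm
    apply Finset.sum_eq_zero; intro P _
    apply Finset.sum_eq_zero; intro Q _
    rw [if_neg]
    rintro ⟨h1, h2, h3⟩
    apply h
    refine ⟨?_, ?_, ?_⟩
    · rw [← h3]; positivity
    · rw [← h1]; positivity
    · rw [← h2]; positivity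

lemma M_symm (n : ℕ) (k r s : ℤ) : M n k r s = M n k s r := by
  rw [Mcast, Mcast, Finset.sum_comm]
  apply Finset.sum_congr rfl; intro Q _
  apply Finset.sum_congr rfl; intro P _
  congr 1
  rw [latticeInter_comm]
  apply propext; tauto

lemma M_zero_of_lt_r (n : ℕ) (k r s : ℤ) (h : (n : ℤ) < r) : M n k r s = 0 := by
  rw [Mcast]
  apply Finset.sum_eq_zero; intro P _
  apply Finset.sum_eq_zero; intro Q _
  rw [if_neg]
  rintro ⟨h1, -, -⟩
  have h2 : latticePos P n ≤ n := by
    calc latticePos P n ≤ (Finset.univ : Finset (Fin n)).card := Finset.card_filter_le _ _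
    _ = n := by simp
  omega

lemma M_zero_of_lt_s (n : ℕ) (k r s : ℤ) (h : (n : ℤ) < s) : M n k r s = 0 := by
  rw [M_symm]; exact M_zero_of_lt_r n k s r h

lemma M_zero_of_le_k (n : ℕ) (hn : 1 ≤ n) (k r s : ℤ) (h : (n : ℤ) ≤ k) : M n k r s = 0 := by
  rw [Mcast]
  apply Finset.sum_eq_zero; intro P _
  apply Finset.sum_eq_zero; intro Q _
  rw [if_neg]
  rintro ⟨-, -, h3⟩
  have hle : latticeInter P Q ≤ (Finset.Ioo 0 n).card := Finset.card_filter_le _ _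
  have hc : (Finset.Ioo 0 n).card = n - 1 := by simp [Nat.card_Ioo]
  omega

lemma M_zero_of_neg_k (n k r s : ℤ) (h : k < 0) : M n k r s = 0 := by
  unfold M; rw [if_neg]; rintro ⟨-, h2, -⟩; omega

lemma M_zero_of_neg_r (n k r s : ℤ) (h : r < 0) : M n k r s = 0 := by
  unfold M; rw [if_neg]; rintro ⟨-, -, h2, -⟩; omega

/-! ### the truncation recurrence -/

/-- indicator of equality over ℤ -/
def eZ (x y : ℤ) : ℤ := if x = y then 1 else 0

/-- Bool to 0/1 -/
def cB (a : Bool) : ℤ := if a then 1 else 0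

def snocEquivAux (n : ℕ) : ((Fin n → Bool) × Bool) ≃ (Fin (n+1) → Bool) :=
    ⟨fun Pa => Fin.snoc Pa.1 Pa.2, fun f => (Fin.init f, f (Fin.last n)),
     fun Pa => by simp [Fin.init_snoc, Fin.snoc_last],
     fun f => by simp [Fin.snoc_init_self]⟩

lemma M_rec (n : ℕ) (hn : 1 ≤ n) (k r s : ℤ) :
    M ((n : ℤ) + 1) k r s =
      M n (k - eZ (r-1) (s-1)) (r-1) (s-1) + M n (k - eZ (r-1) s) (r-1) s
      + M n (k - eZ r (s-1)) r (s-1) + M n (k - eZ r s) r s := by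
  classical
  have hc : ((n : ℤ) + 1) = ((n + 1 : ℕ) : ℤ) := by push_cast; ring
  rw [hc, Mcast (n+1), Mcast n, Mcast n, Mcast n, Mcast n]
  have hsum : ∀ (g : (Fin (n+1) → Bool) → ℤ),
      (∑ f : Fin (n+1) → Bool, g f) = ∑ P : Fin n → Bool, ∑ a : Bool, g (Fin.snoc P a) := by
    intro g
    rw [← Fintype.sum_equiv (snocEquivAux n) (fun x => g (snocEquivAux n x)) g (fun x => rfl),
      Fintype.sum_prod_type]
    simp only [snocEquivAux, Equiv.coe_fn_mk]
  rw [hsum]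
  have key : ∀ (a b : Bool) (P Q : Fin n → Bool),
      ((if ((latticePos (Fin.snoc P a : Fin (n+1) → Bool) (n+1) : ℤ) = r ∧
            (latticePos (Fin.snoc Q b : Fin (n+1) → Bool) (n+1) : ℤ) = s ∧
            (latticeInter (Fin.snoc P a : Fin (n+1) → Bool) (Fin.snoc Q b) : ℤ) = k)
        then (1:ℤ) else 0)) =
      (if ((latticePos P n : ℤ) = r - cB a ∧ (latticePos Q n : ℤ) = s - cB b ∧
           (latticeInter P Q : ℤ) = k - eZ (r - cB a) (s - cB b)) then (1:ℤ) else 0) := by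
    intro a b P Q
    rw [latticePos_snoc_top, latticePos_snoc_top, latticeInter_snoc hn]
    congr 1
    apply propext
    push_cast
    unfold eZ cB
    constructor <;> rintro ⟨h1, h2, h3⟩ <;> refine ⟨?_, ?_, ?_⟩ <;>
      split_ifs at * <;> omega
  calc (∑ P : Fin n → Bool, ∑ a : Bool, ∑ f : Fin (n+1) → Bool,
          (if ((latticePos (Fin.snoc P a : Fin (n+1) → Bool) (n+1) : ℤ) = r ∧
            (latticePos f (n+1) : ℤ) = s ∧
            (latticeInter (Fin.snoc P a : Fin (n+1) → Bool) f : ℤ) = k) then (1:ℤ) else 0))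
      = ∑ P : Fin n → Bool, ∑ a : Bool, ∑ Q : Fin n → Bool, ∑ b : Bool,
          (if ((latticePos P n : ℤ) = r - cB a ∧ (latticePos Q n : ℤ) = s - cB b ∧
           (latticeInter P Q : ℤ) = k - eZ (r - cB a) (s - cB b)) then (1:ℤ) else 0) := by
        apply Finset.sum_congr rfl; intro P _
        apply Finset.sum_congr rfl; intro a _
        rw [hsum]
        apply Finset.sum_congr rfl; intro Q _
        apply Finset.sum_congr rfl; intro b _
        rw [key]
    _ = _ := by
        simp only [Fintype.sum_bool, Finset.sum_add_distrib]
        simp only [cB, if_true, if_false]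
        norm_num
        ring

/-! ### binomial side -/

/-- `[x^m] C(x)^j` where `C` is the Catalan GF, as a difference of binomials. -/
def phi (m j : ℤ) : ℤ := ichoose (2*m+j-1) m - ichoose (2*m+j-1) (m-1)

lemma ichoose_neg_right (a b : ℤ) (h : b < 0) : ichoose a b = 0 := by
  unfold ichoose; rw [if_neg]; rintro ⟨-, h2⟩; omega

lemma ichoose_nonneg_eq (a b : ℤ) (ha : 0 ≤ a) (hb : 0 ≤ b) :
    ichoose a b = (a.toNat).choose b.toNat := by
  unfold ichoose; rw [if_pos ⟨ha, hb⟩]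

lemma ichoose_pascal (a b : ℤ) (ha : 0 ≤ a) :
    ichoose (a+1) (b+1) = ichoose a b + ichoose a (b+1) := by
  rcases lt_trichotomy b (-1) with hb | hb | hb
  · rw [ichoose_neg_right _ _ (by omega), ichoose_neg_right _ _ (by omega),
      ichoose_neg_right _ _ (by omega)]; ring
  · subst hb
    rw [ichoose_neg_right a (-1) (by omega)]
    rw [ichoose_nonneg_eq _ _ (by omega) (by omega), ichoose_nonneg_eq _ _ ha (by omega)]
    simp
  · have hb0 : 0 ≤ b := by omega
    rw [ichoose_nonneg_eq _ _ (by omega) (by omega), ichoose_nonneg_eq _ _ ha hb0,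
      ichoose_nonneg_eq _ _ ha (by omega)]
    have h1 : (a+1).toNat = a.toNat + 1 := by omega
    have h2 : (b+1).toNat = b.toNat + 1 := by omega
    rw [h1, h2, Nat.choose_succ_succ]
    push_cast; ring

lemma phi_zero_left (m j : ℤ) (hm : m < 0) : phi m j = 0 := by
  unfold phi
  rw [ichoose_neg_right _ _ (by omega), ichoose_neg_right _ _ (by omega)]; ring

lemma phi_zero_j (j : ℤ) (hj : 1 ≤ j) : phi 0 j = 1 := by
  unfold phi
  rw [show (2*(0:ℤ)+j-1) = j-1 from by ring, show ((0:ℤ)-1) = -1 from by ring]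
  rw [ichoose_neg_right _ (-1) (by omega), ichoose_nonneg_eq (j-1) 0 (by omega) le_rfl]
  simp

/-- (I): `φ(m,j) = φ(m,j-1) + φ(m-1,j+1)` for `j ≥ 2`. -/
lemma phi_split (m j : ℤ) (hj : 2 ≤ j) : phi m j = phi m (j-1) + phi (m-1) (j+1) := by
  rcases lt_trichotomy m 0 with hm | hm | hm
  · rw [phi_zero_left _ _ hm, phi_zero_left _ _ hm, phi_zero_left _ _ (by omega)]; ring
  · subst hm
    rw [phi_zero_j _ (by omega), phi_zero_j _ (by omega), phi_zero_left _ _ (by omega)]; ring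
  · have hA : ichoose (2*m+j-1) m = ichoose (2*m+j-2) (m-1) + ichoose (2*m+j-2) m := by
      have h := ichoose_pascal (2*m+j-2) (m-1) (by omega)
      rw [show 2*m+j-2+1 = 2*m+j-1 from by ring, show m-1+1 = m from by ring] at h
      exact h
    have hB : ichoose (2*m+j-1) (m-1) = ichoose (2*m+j-2) (m-2) + ichoose (2*m+j-2) (m-1) := by
      have h := ichoose_pascal (2*m+j-2) (m-2) (by omega)
      rw [show 2*m+j-2+1 = 2*m+j-1 from by ring, show m-2+1 = m-1 from by ring] at h
      exact h
    unfold phi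
    rw [show 2*m+(j-1)-1 = 2*m+j-2 from by ring, show 2*(m-1)+(j+1)-1 = 2*m+j-2 from by ring,
      show m-1-1 = m-2 from by ring, hA, hB]
    ring

/-- (II): `φ(m,1) = φ(m-1,2)` for `m ≥ 1`. -/
lemma phi_one (m : ℤ) (hm : 1 ≤ m) : phi m 1 = phi (m-1) 2 := by
  have hA : ichoose (2*m) m = ichoose (2*m-1) (m-1) + ichoose (2*m-1) m := by
    have h := ichoose_pascal (2*m-1) (m-1) (by omega)
    rw [show 2*m-1+1 = 2*m from by ring, show m-1+1 = m from by ring] at h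
    exact h
  have hB : ichoose (2*m) (m-1) = ichoose (2*m-1) (m-2) + ichoose (2*m-1) (m-1) := by
    have h := ichoose_pascal (2*m-1) (m-2) (by omega)
    rw [show 2*m-1+1 = 2*m from by ring, show m-2+1 = m-1 from by ring] at h
    exact h
  have hs : ichoose (2*m-1) m = ichoose (2*m-1) (m-1) := by
    rw [ichoose_nonneg_eq _ _ (by omega) (by omega), ichoose_nonneg_eq _ _ (by omega) (by omega)]
    have h := Nat.choose_symm (n := (2*m-1).toNat) (k := (m-1).toNat) (by omega)
    rw [show (2*m-1).toNat - (m-1).toNat = m.toNat from by omega] at h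
    exact_mod_cast h
  unfold phi
  rw [show 2*m+1-1 = 2*m from by ring, show 2*(m-1)+2-1 = 2*m-1 from by ring,
    show m-1-1 = m-2 from by ring, hA, hB, hs]
  ring

/-- triple split: `φ(m,j) = φ(m,j-2) + 2φ(m-1,j) + φ(m-2,j+2)` for `j ≥ 3`. -/
lemma phi_triple (m j : ℤ) (hj : 3 ≤ j) :
    phi m j = phi m (j-2) + 2 * phi (m-1) j + phi (m-2) (j+2) := by
  have h1 := phi_split m j (by omega)
  have h2 := phi_split m (j-1) (by omega)
  have h3 := phi_split (m-1) (j+1) (by omega)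
  rw [show j-1-1 = j-2 from by ring, show j-1+1 = j from by ring] at h2
  rw [show j+1-1 = j from by ring, show j+1+1 = j+2 from by ring,
    show m-1-1 = m-2 from by ring] at h3
  rw [h1, h2, h3]; ring

/-- `n · φ(m, j) = j · C(2m+j-1, m)` when `n = m + j`. -/
lemma phi_mul (m j : ℤ) (hm : 0 ≤ m) (hj : 1 ≤ j) :
    (m + j) * phi m j = j * ichoose (2*m+j-1) m := by
  rcases eq_or_lt_of_le hm with hm0 | hm1
  · subst hm0
    rw [phi_zero_j j hj]
    rw [show 2*(0:ℤ)+j-1 = j-1 from by ring,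
      ichoose_nonneg_eq (j-1) 0 (by omega) le_rfl]
    simp
  · have hA : ichoose (2*m+j-1) m * (m : ℤ) = ichoose (2*m+j-1) (m-1) * (m+j) := by
      rw [ichoose_nonneg_eq _ _ (by omega) (by omega), ichoose_nonneg_eq _ _ (by omega) (by omega)]
      have h := Nat.choose_succ_right_eq (2*m+j-1).toNat ((m-1).toNat)
      rw [show (m-1).toNat + 1 = m.toNat from by omega,
        show (2*m+j-1).toNat - (m-1).toNat = (m+j).toNat from by omega] at h
      have h3 := congrArg (Nat.cast (R := ℤ)) h
      push_cast at h3
      rwa [Int.toNat_of_nonneg hm, Int.toNat_of_nonneg (by omega : (0:ℤ) ≤ m + j)] at h3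
    unfold phi
    linear_combination hA

lemma ichoose_symm (a b c : ℤ) (h : b + c = a) (hb : 0 ≤ b) (hc : 0 ≤ c) :
    ichoose a b = ichoose a c := by
  rw [ichoose_nonneg_eq _ _ (by omega) hb, ichoose_nonneg_eq _ _ (by omega) hc]
  have h2 := Nat.choose_symm (n := a.toNat) (k := c.toNat) (by omega)
  rw [show a.toNat - c.toNat = b.toNat from by omega] at h2
  exact_mod_cast h2

/-! ### summation layer -/

/-- sum of `M n k p (p+d)` over the diagonal band. -/
noncomputable def Sfun (n k : ℤ) : ℤ := ∑ p ∈ Finset.Icc (0:ℤ) n, M n k p p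

noncomputable def Ufun (n k d : ℤ) : ℤ := ∑ p ∈ Finset.Icc (0:ℤ) n, M n k p (p+d)

lemma sum_shift' (g : ℤ → ℤ) (b : ℤ) (hb : (-1 : ℤ) ≤ b) (h0 : g (-1) = 0) :
    ∑ p ∈ Finset.Icc (0:ℤ) (b+1), g (p-1) = ∑ p ∈ Finset.Icc (0:ℤ) b, g p := by
  have h1 : ∑ p ∈ Finset.Icc (0:ℤ) (b+1), g (p-1) = ∑ p ∈ Finset.Icc (-1:ℤ) b, g p := by
    rw [show Finset.Icc (-1:ℤ) b = Finset.map (addRightEmbedding (-1)) (Finset.Icc 0 (b+1)) from ?_]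
    · rw [Finset.sum_map]
      apply Finset.sum_congr rfl; intro p _
      simp [addRightEmbedding]
      ring_nf
    · rw [Finset.map_add_right_Icc]
      congr 1 <;> ring
  rw [h1, show Finset.Icc (-1:ℤ) b = insert (-1) (Finset.Icc 0 b) from ?_]
  · rw [Finset.sum_insert (by simp), h0, zero_add]
  · ext x; simp [Finset.mem_Icc, Finset.mem_insert]; omega

lemma sum_top (g : ℤ → ℤ) (b : ℤ) (hb : (0:ℤ) ≤ b + 1) (h0 : g (b+1) = 0) :
    ∑ p ∈ Finset.Icc (0:ℤ) (b+1), g p = ∑ p ∈ Finset.Icc (0:ℤ) b, g p := by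
  rw [show Finset.Icc (0:ℤ) (b+1) = insert (b+1) (Finset.Icc 0 b) from ?_]
  · rw [Finset.sum_insert (by intro hmem; rw [Finset.mem_Icc] at hmem; omega), h0, zero_add]
  · ext x; simp [Finset.mem_Icc, Finset.mem_insert]; omega

lemma Sfun_neg (n k : ℤ) (h : k < 0) : Sfun n k = 0 := by
  unfold Sfun
  exact Finset.sum_eq_zero (fun p _ => M_zero_of_neg_k n k p p h)

/-- the recurrence for the diagonal sum. -/
lemma Sfun_rec (n : ℕ) (hn : 1 ≤ n) (k : ℤ) :
    Sfun ((n:ℤ)+1) k = 2 * Sfun n (k-1) + 2 * Ufun n k 1 := by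
  unfold Sfun Ufun
  have hterm : ∀ p : ℤ, M ((n:ℤ)+1) k p p =
      M n (k-1) (p-1) (p-1) + M n k (p-1) p + M n k p (p-1) + M n (k-1) p p := by
    intro p
    rw [M_rec n hn k p p]
    unfold eZ
    rw [if_pos rfl, if_pos rfl, if_neg (by omega), if_neg (by omega)]
    ring_nf
  rw [Finset.sum_congr rfl (fun p _ => hterm p)]
  simp only [Finset.sum_add_distrib]
  have e1 : ∑ p ∈ Finset.Icc (0:ℤ) ((n:ℤ)+1), M n (k-1) (p-1) (p-1)
      = ∑ p ∈ Finset.Icc (0:ℤ) (n:ℤ), M n (k-1) p p :=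
    sum_shift' (fun q => M n (k-1) q q) n (by omega) (M_zero_of_neg_r _ _ _ _ (by omega))
  have e2 : ∑ p ∈ Finset.Icc (0:ℤ) ((n:ℤ)+1), M n k (p-1) p
      = ∑ p ∈ Finset.Icc (0:ℤ) (n:ℤ), M n k p (p+1) := by
    rw [← sum_shift' (fun q => M n k q (q+1)) n (by omega)
      (M_zero_of_neg_r _ _ _ _ (by omega))]
    apply Finset.sum_congr rfl; intro p _
    congr 1; ring
  have e3 : ∑ p ∈ Finset.Icc (0:ℤ) ((n:ℤ)+1), M n k p (p-1)
      = ∑ p ∈ Finset.Icc (0:ℤ) (n:ℤ), M n k p (p+1) := by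
    rw [Finset.sum_congr rfl (fun p _ => M_symm n k p (p-1))]
    exact e2
  have e4 : ∑ p ∈ Finset.Icc (0:ℤ) ((n:ℤ)+1), M n (k-1) p p
      = ∑ p ∈ Finset.Icc (0:ℤ) (n:ℤ), M n (k-1) p p :=
    sum_top (fun q => M n (k-1) q q) n (by omega) (M_zero_of_lt_r _ _ _ _ (by omega))
  rw [e1, e2, e3, e4]; ring

lemma Ufun_rec1 (n : ℕ) (hn : 1 ≤ n) (k : ℤ) :
    Ufun ((n:ℤ)+1) k 1 = Sfun n (k-1) + 2 * Ufun n k 1 + Ufun n k 2 := by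
  unfold Sfun Ufun
  have hterm : ∀ p : ℤ, M ((n:ℤ)+1) k p (p+1) =
      M n k (p-1) p + M n k (p-1) (p+1) + M n (k-1) p p + M n k p (p+1) := by
    intro p
    rw [M_rec n hn k p (p+1)]
    unfold eZ
    rw [show p+1-1 = p from by ring]
    rw [if_neg (by omega), if_neg (by omega), if_pos rfl, if_neg (by omega)]
    ring_nf
  rw [Finset.sum_congr rfl (fun p _ => hterm p)]
  simp only [Finset.sum_add_distrib]
  have e1 : ∑ p ∈ Finset.Icc (0:ℤ) ((n:ℤ)+1), M n k (p-1) p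
      = ∑ p ∈ Finset.Icc (0:ℤ) (n:ℤ), M n k p (p+1) := by
    rw [← sum_shift' (fun q => M n k q (q+1)) n (by omega)
      (M_zero_of_neg_r _ _ _ _ (by omega))]
    apply Finset.sum_congr rfl; intro p _
    congr 1; ring
  have e2 : ∑ p ∈ Finset.Icc (0:ℤ) ((n:ℤ)+1), M n k (p-1) (p+1)
      = ∑ p ∈ Finset.Icc (0:ℤ) (n:ℤ), M n k p (p+2) := by
    rw [← sum_shift' (fun q => M n k q (q+2)) n (by omega)
      (M_zero_of_neg_r _ _ _ _ (by omega))]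
    apply Finset.sum_congr rfl; intro p _
    congr 1; ring
  have e3 : ∑ p ∈ Finset.Icc (0:ℤ) ((n:ℤ)+1), M n (k-1) p p
      = ∑ p ∈ Finset.Icc (0:ℤ) (n:ℤ), M n (k-1) p p :=
    sum_top (fun q => M n (k-1) q q) n (by omega) (M_zero_of_lt_r _ _ _ _ (by omega))
  have e4 : ∑ p ∈ Finset.Icc (0:ℤ) ((n:ℤ)+1), M n k p (p+1)
      = ∑ p ∈ Finset.Icc (0:ℤ) (n:ℤ), M n k p (p+1) :=
    sum_top (fun q => M n k q (q+1)) n (by omega) (M_zero_of_lt_r _ _ _ _ (by omega))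
  rw [e1, e2, e3, e4]; ring

lemma Ufun_recd (n : ℕ) (hn : 1 ≤ n) (k d : ℤ) (hd : 2 ≤ d) :
    Ufun ((n:ℤ)+1) k d = Ufun n k (d-1) + 2 * Ufun n k d + Ufun n k (d+1) := by
  unfold Ufun
  have hterm : ∀ p : ℤ, M ((n:ℤ)+1) k p (p+d) =
      M n k (p-1) (p+d-1) + M n k (p-1) (p+d) + M n k p (p+d-1) + M n k p (p+d) := by
    intro p
    rw [M_rec n hn k p (p+d)]
    unfold eZ
    rw [if_neg (by omega), if_neg (by omega), if_neg (by omega), if_neg (by omega)]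
    ring_nf
  rw [Finset.sum_congr rfl (fun p _ => hterm p)]
  simp only [Finset.sum_add_distrib]
  have e1 : ∑ p ∈ Finset.Icc (0:ℤ) ((n:ℤ)+1), M n k (p-1) (p+d-1)
      = ∑ p ∈ Finset.Icc (0:ℤ) (n:ℤ), M n k p (p+d) := by
    rw [← sum_shift' (fun q => M n k q (q+d)) n (by omega)
      (M_zero_of_neg_r _ _ _ _ (by omega))]
    apply Finset.sum_congr rfl; intro p _
    congr 1; ring
  have e2 : ∑ p ∈ Finset.Icc (0:ℤ) ((n:ℤ)+1), M n k (p-1) (p+d)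
      = ∑ p ∈ Finset.Icc (0:ℤ) (n:ℤ), M n k p (p+d+1) := by
    rw [← sum_shift' (fun q => M n k q (q+d+1)) n (by omega)
      (M_zero_of_neg_r _ _ _ _ (by omega))]
    apply Finset.sum_congr rfl; intro p _
    congr 1; ring
  have e3 : ∑ p ∈ Finset.Icc (0:ℤ) ((n:ℤ)+1), M n k p (p+d-1)
      = ∑ p ∈ Finset.Icc (0:ℤ) (n:ℤ), M n k p (p+d-1) :=
    sum_top (fun q => M n k q (q+d-1)) n (by omega) (M_zero_of_lt_r _ _ _ _ (by omega))
  have e4 : ∑ p ∈ Finset.Icc (0:ℤ) ((n:ℤ)+1), M n k p (p+d)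
      = ∑ p ∈ Finset.Icc (0:ℤ) (n:ℤ), M n k p (p+d) :=
    sum_top (fun q => M n k q (q+d)) n (by omega) (M_zero_of_lt_r _ _ _ _ (by omega))
  rw [e1, e2, e3, e4]
  have e5 : ∑ p ∈ Finset.Icc (0:ℤ) (n:ℤ), M n k p (p+d-1)
      = ∑ p ∈ Finset.Icc (0:ℤ) (n:ℤ), M n k p (p+(d-1)) := by
    apply Finset.sum_congr rfl; intro p _; congr 1; ring
  have e6 : ∑ p ∈ Finset.Icc (0:ℤ) (n:ℤ), M n k p (p+d+1)
      = ∑ p ∈ Finset.Icc (0:ℤ) (n:ℤ), M n k p (p+(d+1)) := by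
    apply Finset.sum_congr rfl; intro p _; congr 1; ring
  rw [e5, e6]; ring

/-! ### base case -/

lemma M_one_zero_zero : M 1 0 0 0 = 1 := by
  unfold M Mnat
  norm_num
  decide

lemma M_one_zero_one : M 1 0 0 1 = 1 := by
  unfold M Mnat
  norm_num
  decide

lemma M_one_one_one : M 1 0 1 1 = 1 := by
  unfold M Mnat
  norm_num
  decide

lemma Icc_zero_one : Finset.Icc (0:ℤ) 1 = {0, 1} := by decide

lemma Sfun_base (k : ℤ) (hk : 0 ≤ k) :
    Sfun 1 k = 2^(k.toNat+1) * phi (1-k-1) (k+1) := by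
  unfold Sfun
  rw [Icc_zero_one, Finset.sum_pair (by norm_num)]
  rcases eq_or_lt_of_le hk with h0 | h1
  · subst h0
    rw [M_one_zero_zero, M_one_one_one, show (1:ℤ)-0-1 = 0 from by ring,
      show ((0:ℤ)+1) = 1 from by ring, phi_zero_j 1 le_rfl]
    norm_num
  · have hz1 : M 1 k 0 0 = 0 := by
      have := M_zero_of_le_k 1 le_rfl k 0 0 (by push_cast; omega)
      simpa using this
    have hz2 : M 1 k 1 1 = 0 := by
      have := M_zero_of_le_k 1 le_rfl k 1 1 (by push_cast; omega)
      simpa using this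
    rw [hz1, hz2, phi_zero_left _ _ (by omega)]
    ring

lemma Ufun_base (k d : ℤ) (hk : 0 ≤ k) (hd : 1 ≤ d) :
    Ufun 1 k d = 2^(k.toNat) * phi (1-k-d) (k+2*d) := by
  unfold Ufun
  rw [Icc_zero_one, Finset.sum_pair (by norm_num)]
  have htop : M 1 k 1 (1+d) = 0 := by
    have := M_zero_of_lt_s 1 k 1 (1+d) (by push_cast; omega)
    simpa using this
  rcases eq_or_lt_of_le hk with h0 | h1
  · subst h0
    rcases eq_or_lt_of_le hd with hd0 | hd1
    · rw [← hd0] at htop ⊢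
      rw [show ((0:ℤ)+1) = 1 from by ring, M_one_zero_one, htop,
        show (1:ℤ)-0-1 = 0 from by ring, show ((0:ℤ)+2*1) = 2 from by ring,
        phi_zero_j 2 (by norm_num)]
      norm_num
    · have hz : M 1 0 0 (0+d) = 0 := by
        have := M_zero_of_lt_s 1 0 0 (0+d) (by push_cast; omega)
        simpa using this
      rw [hz, htop, phi_zero_left _ _ (by omega)]
      ring
  · have hz : M 1 k 0 (0+d) = 0 := by
      have := M_zero_of_le_k 1 le_rfl k 0 (0+d) (by push_cast; omega)
      simpa using this
    rw [hz, htop, phi_zero_left _ _ (by omega)]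
    ring

/-! ### the master induction -/

theorem master : ∀ n : ℕ, 1 ≤ n →
    (∀ k : ℤ, 0 ≤ k → Sfun n k = 2^(k.toNat+1) * phi ((n:ℤ)-k-1) (k+1)) ∧
    (∀ k d : ℤ, 0 ≤ k → 1 ≤ d → Ufun n k d = 2^(k.toNat) * phi ((n:ℤ)-k-d) (k+2*d)) := by
  intro n
  induction n with
  | zero => intro h; omega
  | succ n ih =>
    intro _
    rcases Nat.eq_zero_or_pos n with hn0 | hn1
    · subst hn0
      constructor
      · intro k hk
        rw [show ((0+1:ℕ):ℤ) = 1 from by norm_num]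
        exact Sfun_base k hk
      · intro k d hk hd
        rw [show ((0+1:ℕ):ℤ) = 1 from by norm_num]
        exact Ufun_base k d hk hd
    · obtain ⟨ihS, ihU⟩ := ih hn1
      have hcast : ((n+1 : ℕ) : ℤ) = (n:ℤ) + 1 := by push_cast; ring
      constructor
      · intro k hk
        rw [show Sfun ((n+1:ℕ):ℤ) k = Sfun ((n:ℤ)+1) k from by rw [hcast]]
        rw [Sfun_rec n hn1 k]
        rcases eq_or_lt_of_le hk with h0 | h1
        · subst h0
          rw [Sfun_neg _ _ (by norm_num), ihU 0 1 le_rfl le_rfl]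
          rw [hcast]
          rw [show ((n:ℤ)+1-0-1) = (n:ℤ) from by ring, show ((0:ℤ)+1) = 1 from by ring]
          rw [phi_one (n:ℤ) (by exact_mod_cast hn1)]
          rw [show ((n:ℤ)-0-1) = (n:ℤ)-1 from by ring, show ((0:ℤ)+2*1) = 2 from by ring]
          norm_num
        · rw [ihS (k-1) (by omega), ihU k 1 hk le_rfl]
          rw [hcast]
          rw [show ((n:ℤ)+1-k-1) = (n:ℤ)-k from by ring]
          rw [phi_split ((n:ℤ)-k) (k+1) (by omega)]
          rw [show (k+1-1 : ℤ) = k from by ring, show ((n:ℤ)-k-1) = (n:ℤ)-k-1 from rfl,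
            show (k+1+1 : ℤ) = k+2 from by ring, show (k-1+1:ℤ) = k from by ring,
            show ((n:ℤ)-(k-1)-1) = (n:ℤ)-k from by ring, show (k+2*1:ℤ) = k+2 from by ring]
          rw [show (k-1).toNat + 1 = k.toNat from by omega]
          ring
      · intro k d hk hd
        rcases eq_or_lt_of_le hd with hd0 | hd1
        · -- d = 1
          rw [← hd0]
          rw [show Ufun ((n+1:ℕ):ℤ) k 1 = Ufun ((n:ℤ)+1) k 1 from by rw [hcast]]
          rw [Ufun_rec1 n hn1 k]
          rcases eq_or_lt_of_le hk with h0 | h1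
          · subst h0
            rw [Sfun_neg _ _ (by norm_num), ihU 0 1 le_rfl le_rfl, ihU 0 2 le_rfl (by norm_num)]
            rw [hcast]
            rw [show ((n:ℤ)+1-0-1) = (n:ℤ) from by ring, show ((0:ℤ)+2*1) = 2 from by ring,
              show ((n:ℤ)-0-1) = (n:ℤ)-1 from by ring, show ((n:ℤ)-0-2) = (n:ℤ)-2 from by ring,
              show ((0:ℤ)+2*2) = 4 from by ring]
            have hsp1 : phi (n:ℤ) 2 = phi (n:ℤ) 1 + phi ((n:ℤ)-1) 3 := phi_split _ 2 le_rfl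
            have hsp2 : phi (n:ℤ) 1 = phi ((n:ℤ)-1) 2 := phi_one _ (by exact_mod_cast hn1)
            have hsp3 : phi ((n:ℤ)-1) 3 = phi ((n:ℤ)-1) 2 + phi ((n:ℤ)-2) 4 := by
              have := phi_split ((n:ℤ)-1) 3 (by norm_num)
              rw [show (3-1:ℤ) = 2 from by ring, show (3+1:ℤ) = 4 from by ring,
                show ((n:ℤ)-1-1) = (n:ℤ)-2 from by ring] at this
              exact this
            rw [hsp1, hsp2, hsp3]
            norm_num
            ring
          · rw [ihS (k-1) (by omega), ihU k 1 hk le_rfl, ihU k 2 hk (by norm_num)]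
            rw [hcast]
            rw [show ((n:ℤ)-(k-1)-1) = (n:ℤ)+1-k-1 from by ring,
              show (k-1+1:ℤ) = k+2*1-2 from by ring,
              show ((n:ℤ)-k-1) = (n:ℤ)+1-k-1-1 from by ring,
              show ((n:ℤ)-k-2) = (n:ℤ)+1-k-1-2 from by ring,
              show (k+2*2:ℤ) = k+2*1+2 from by ring,
              show (k-1).toNat + 1 = k.toNat from by omega]
            rw [phi_triple ((n:ℤ)+1-k-1) (k+2*1) (by omega)]
            ring
        · -- d ≥ 2
          rw [show Ufun ((n+1:ℕ):ℤ) k d = Ufun ((n:ℤ)+1) k d from by rw [hcast]]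
          rw [Ufun_recd n hn1 k d (by omega)]
          rw [ihU k (d-1) hk (by omega), ihU k d hk hd, ihU k (d+1) hk (by omega)]
          rw [hcast]
          rw [show ((n:ℤ)-k-(d-1)) = (n:ℤ)+1-k-d from by ring,
            show (k+2*(d-1):ℤ) = k+2*d-2 from by ring,
            show ((n:ℤ)-k-(d+1)) = (n:ℤ)+1-k-d-2 from by ring,
            show (k+2*(d+1):ℤ) = k+2*d+2 from by ring,
            show ((n:ℤ)-k-d) = (n:ℤ)+1-k-d-1 from by ring]
          rw [phi_triple ((n:ℤ)+1-k-d) (k+2*d) (by omega)]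
          ring

/-- `n · Σ_{p=0}^{n} N(n,k,p) = 2^(k+1) · (k+1) · binom(2n−k−2, n−1)`. -/
theorem N_total_sum (n k : ℤ) (hn : 1 ≤ n) (hk : 0 ≤ k) (hkn : k ≤ n - 1) :
    n * ∑ p ∈ Finset.Icc (0 : ℤ) n, N n k p =
      2 ^ (k + 1).toNat * (k + 1) * ichoose (2 * n - k - 2) (n - 1) := by
  have hnn : ((n.toNat : ℤ)) = n := Int.toNat_of_nonneg (by omega)
  have hn1 : 1 ≤ n.toNat := by omega
  have hS : (∑ p ∈ Finset.Icc (0 : ℤ) n, N n k p) = Sfun n k := by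
    unfold Sfun N; rfl
  rw [hS]
  have hmaster := (master n.toNat hn1).1 k hk
  rw [hnn] at hmaster
  rw [hmaster]
  have hmul := phi_mul (n-k-1) (k+1) (by omega) (by omega)
  rw [show (n-k-1) + (k+1) = n from by ring,
    show 2*(n-k-1)+(k+1)-1 = 2*n-k-2 from by ring] at hmul
  have hsymm : ichoose (2*n-k-2) (n-k-1) = ichoose (2*n-k-2) (n-1) :=
    ichoose_symm (2*n-k-2) (n-k-1) (n-1) (by ring) (by omega) (by omega)
  rw [show (k+1).toNat = k.toNat + 1 from by omega]
  calc n * (2^(k.toNat+1) * phi (n-k-1) (k+1))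
      = 2^(k.toNat+1) * (n * phi (n-k-1) (k+1)) := by ring
    _ = 2^(k.toNat+1) * ((k+1) * ichoose (2*n-k-2) (n-k-1)) := by rw [hmul]
    _ = 2^(k.toNat+1) * (k+1) * ichoose (2*n-k-2) (n-1) := by rw [hsymm]; ring
end
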